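/- For all integers n ≥ 2 and k ≥ 1, Σ_{j=1}^{n−1} j·A_{n−1,j}·binom(n+k−j−1, n−1) = k^n − n·Σ_{s=1}^{k−1} s^{n−1}. -/

import Mathlib

/-- Number of descents of a permutation of `{1,...,n}` (here `Fin n`, 0-indexed):
the number of positions `i` with `1 ≤ i ≤ n-1` and `π(i) > π(i+1)`. -/
def numDescents (n : ℕ) (π : Equiv.Perm (Fin n)) : ℕ :=
  ((Finset.range (n - 1)).filter (fun i =>
    ∃ h : i + 1 < n, π ⟨i + 1, h⟩ < π ⟨i, Nat.lt_of_succ_lt h⟩)).card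

/-- `π` has a cyclic descent at `n` if `π(n) > π(1)`. -/
def hasCyclicDescentAtLast (n : ℕ) (π : Equiv.Perm (Fin n)) : Prop :=
  ∃ h : 0 < n, π ⟨0, h⟩ < π ⟨n - 1, Nat.sub_lt h Nat.one_pos⟩

instance (n : ℕ) (π : Equiv.Perm (Fin n)) : Decidable (hasCyclicDescentAtLast n π) :=
  exists_prop_decidable _

/-- Number of cyclic descents: `d(π)+1` if `π` has a cyclic descent at `n`, else `d(π)`. -/
def numCyclicDescents (n : ℕ) (π : Equiv.Perm (Fin n)) : ℕ :=
  numDescents n π + if hasCyclicDescentAtLast n π then 1 else 0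

/-- The k-riffle shuffle measure `R_{k,n}(π) = binom(n+k-d(π)-1, n) / k^n`. -/
noncomputable def riffle (k n : ℕ) (π : Equiv.Perm (Fin n)) : ℝ :=
  (Nat.choose (n + k - numDescents n π - 1) n : ℝ) / (k : ℝ) ^ n

/-- The cut-then-k-riffle-shuffle measure
`C_{k,n}(π) = binom(n+k-cd(π)-1, n-1) / (n·k^(n-1))`. -/
noncomputable def cutRiffle (k n : ℕ) (π : Equiv.Perm (Fin n)) : ℝ :=
  (Nat.choose (n + k - numCyclicDescents n π - 1) (n - 1) : ℝ) / ((n : ℝ) * (k : ℝ) ^ (n - 1))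

/-- Eulerian number `A_{m,j}`: the number of permutations of `m` symbols with `j-1` descents. -/
def eulerianA (m j : ℕ) : ℕ :=
  (Finset.univ.filter (fun π : Equiv.Perm (Fin m) => numDescents m π = j - 1)).card

namespace Worpitzky

open Finset

variable {M k : ℕ}

/-- descent at position `i` (between `i` and `i+1`) -/
def descN (π : Equiv.Perm (Fin (M+1))) (i : ℕ) : Prop :=
  ∃ h : i + 1 < M + 1, π ⟨i + 1, h⟩ < π ⟨i, Nat.lt_of_succ_lt h⟩

instance (π : Equiv.Perm (Fin (M+1))) (i : ℕ) : Decidable (descN π i) :=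
  exists_prop_decidable _

lemma numDescents_eq (π : Equiv.Perm (Fin (M+1))) :
    numDescents (M+1) π = ((Finset.range M).filter (descN π)).card := rfl

/-- number of ascent positions below `i` -/
def ascB (π : Equiv.Perm (Fin (M+1))) (i : ℕ) : ℕ :=
  ((Finset.range i).filter (fun t => ¬ descN π t)).card

def Cond (π : Equiv.Perm (Fin (M+1))) (g : Fin (M+1) → Fin k) : Prop :=
  ∀ j : Fin M, g j.castSucc ≤ g j.succ ∧ (descN π j.val → g j.castSucc < g j.succ)

instance (π : Equiv.Perm (Fin (M+1))) (g : Fin (M+1) → Fin k) : Decidable (Cond π g) := by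
  unfold Cond; infer_instance

lemma sort_eq_iff (π : Equiv.Perm (Fin (M+1))) (w : Fin (M+1) → Fin k) :
    Tuple.sort w = π ↔ Cond π (w ∘ π) := by
  rw [eq_comm, Tuple.eq_sort_iff]
  constructor
  · rintro ⟨hm, ht⟩ j
    refine ⟨hm (Fin.castSucc_lt_succ : j.castSucc < j.succ).le, ?_⟩
    rintro ⟨h, hlt⟩
    have e1 : (⟨j.val + 1, h⟩ : Fin (M+1)) = j.succ := rfl
    have e2 : (⟨j.val, Nat.lt_of_succ_lt h⟩ : Fin (M+1)) = j.castSucc := rfl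
    rw [e1, e2] at hlt
    rcases lt_or_eq_of_le (hm (Fin.castSucc_lt_succ : j.castSucc < j.succ).le) with h' | h'
    · exact h'
    · exact absurd (ht _ _ (Fin.castSucc_lt_succ : j.castSucc < j.succ) h') (lt_asymm hlt)
  · intro hc
    have hmono : Monotone (w ∘ π) := Fin.monotone_iff_le_succ.2 fun j => (hc j).1
    refine ⟨hmono, ?_⟩
    have adj : ∀ i j : Fin (M+1), i.val + 1 = j.val → (w ∘ π) i = (w ∘ π) j → π i < π j := by
      intro i j hij he
      have hiM : i.val < M := by omega
      have e1 : i = (⟨i.val, hiM⟩ : Fin M).castSucc := rfl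
      have e2 : j = (⟨i.val, hiM⟩ : Fin M).succ := by
        apply Fin.ext; simp [Fin.succ]; omega
      subst e2
      by_cases hd : descN π i.val
      · exact absurd he (ne_of_lt ((hc ⟨i.val, hiM⟩).2 hd))
      · have h' : i.val + 1 < M + 1 := by omega
        rw [descN] at hd
        push_neg at hd
        have := hd h'
        have hne : π i ≠ π (⟨i.val, hiM⟩ : Fin M).succ := by
          intro hEq
          have : i = (⟨i.val, hiM⟩ : Fin M).succ := π.injective hEq
          have : i.val = i.val + 1 := congrArg Fin.val this
          omega
        have e3 : (⟨i.val + 1, h'⟩ : Fin (M+1)) = (⟨i.val, hiM⟩ : Fin M).succ := rfl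
        have e4 : (⟨i.val, Nat.lt_of_succ_lt h'⟩ : Fin (M+1)) = i := rfl
        rw [e3, e4] at this
        exact lt_of_le_of_ne this hne
    have key : ∀ c (i j : Fin (M+1)), i.val + c + 1 = j.val →
        (w ∘ π) i = (w ∘ π) j → π i < π j := by
      intro c
      induction c with
      | zero => exact fun i j h he => adj i j (by omega) he
      | succ c ih =>
        intro i j hij he
        have hi' : i.val + 1 < M + 1 := by omega
        set i' : Fin (M+1) := ⟨i.val + 1, hi'⟩ with hi'def
        have hle1 : (w ∘ π) i ≤ (w ∘ π) i' := hmono (by simp [Fin.le_def, hi'def])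
        have hle2 : (w ∘ π) i' ≤ (w ∘ π) j := hmono (by simp [Fin.le_def, hi'def]; omega)
        have he1 : (w ∘ π) i = (w ∘ π) i' := le_antisymm hle1 (he ▸ hle2)
        have he2 : (w ∘ π) i' = (w ∘ π) j := he ▸ he1.symm
        exact lt_trans (adj i i' rfl he1) (ih i' j (by simp [hi'def]; omega) he2)
    intro i j hij he
    exact key (j.val - i.val - 1) i j (by have := (Fin.lt_def).mp hij; omega) he

lemma card_fiber (π : Equiv.Perm (Fin (M+1))) (k : ℕ) :
    ((univ : Finset (Fin (M+1) → Fin k)).filter fun w => Tuple.sort w = π).card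
      = ((univ : Finset (Fin (M+1) → Fin k)).filter fun g => Cond π g).card := by
  apply Finset.card_bij' (fun w _ => w ∘ π) (fun g _ => g ∘ ⇑π⁻¹)
  · intro w hw
    simp only [mem_filter, mem_univ, true_and] at hw ⊢
    exact (sort_eq_iff π w).mp hw
  · intro g hg
    simp only [mem_filter, mem_univ, true_and] at hg ⊢
    rw [sort_eq_iff]
    have : (g ∘ ⇑π⁻¹) ∘ ⇑π = g := by
      funext i; simp
    rw [this]; exact hg
  · intro w _; funext i; simp
  · intro g _; funext i; simp

lemma ascB_le_self (π : Equiv.Perm (Fin (M+1))) (i : ℕ) : ascB π i ≤ i :=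
  le_trans (Finset.card_filter_le _ _) (Finset.card_range i).le

lemma ascB_mono (π : Equiv.Perm (Fin (M+1))) {i j : ℕ} (h : i ≤ j) : ascB π i ≤ ascB π j :=
  Finset.card_le_card (Finset.filter_subset_filter _ (Finset.range_subset_range.mpr h))

lemma ascB_succ (π : Equiv.Perm (Fin (M+1))) (j : ℕ) :
    ascB π (j+1) = ascB π j + (if descN π j then 0 else 1) := by
  unfold ascB
  rw [Finset.range_add_one, Finset.filter_insert]
  by_cases hd : descN π j
  · simp [hd]
  · simp [hd, Finset.mem_range]

lemma ascB_total_le (π : Equiv.Perm (Fin (M+1))) {i : ℕ} (h : i ≤ M) :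
    ascB π M ≤ ascB π i + (M - i) := by
  unfold ascB
  have hsplit : Finset.range M = Finset.range i ∪ Finset.Ico i M := by
    simp only [Finset.range_eq_Ico]
    exact (Finset.Ico_union_Ico_eq_Ico (Nat.zero_le i) h).symm
  rw [hsplit, Finset.filter_union]
  refine le_trans (Finset.card_union_le _ _) ?_
  gcongr
  exact le_trans (Finset.card_filter_le _ _) (by rw [Nat.card_Ico])

lemma sm_ge {N : ℕ} {G : Fin (M+1) → Fin N} (hG : StrictMono G) :
    ∀ c (i j : Fin (M+1)), i.val + c = j.val → (G i).val + c ≤ (G j).val := by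
  intro c
  induction c with
  | zero =>
    intro i j h
    have : i = j := Fin.ext (by omega)
    subst this; simp
  | succ c ih =>
    intro i j h
    have hi' : i.val + c < M + 1 := by omega
    have h1 := ih i ⟨i.val + c, hi'⟩ rfl
    have h2 : G ⟨i.val + c, hi'⟩ < G j := hG (by simp [Fin.lt_def]; omega)
    have := (Fin.lt_def).mp h2
    omega

/-- shift bijection: Cond-sequences into Fin k ↔ strictly monotone into Fin (k + a) -/
lemma card_cond (π : Equiv.Perm (Fin (M+1))) (k : ℕ) :
    ((univ : Finset (Fin (M+1) → Fin k)).filter fun g => Cond π g).card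
      = ((univ : Finset (Fin (M+1) → Fin (k + ascB π M))).filter fun G => StrictMono G).card := by
  classical
  refine Finset.card_bij'
    (fun g _ => fun i : Fin (M+1) => (⟨(g i).val + ascB π i.val, by
      have h1 : (g i).val < k := (g i).isLt
      have h2 : ascB π i.val ≤ ascB π M := ascB_mono π i.is_le
      omega⟩ : Fin (k + ascB π M)))
    (fun G hG => fun i : Fin (M+1) => (⟨(G i).val - ascB π i.val, by
      have hsm : StrictMono G := (Finset.mem_filter.mp hG).2
      have h1 := sm_ge hsm (M - i.val) i ⟨M, Nat.lt_succ_self M⟩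
        (by show i.val + (M - i.val) = M; have := i.is_le; omega)
      have h2 : (G ⟨M, Nat.lt_succ_self M⟩).val < k + ascB π M := (G _).isLt
      have h3 := ascB_total_le π i.is_le
      have h4 := ascB_le_self π i.val
      have h5 := sm_ge hsm i.val ⟨0, Nat.succ_pos M⟩ i (by show 0 + i.val = i.val; omega)
      omega⟩ : Fin k))
    ?_ ?_ ?_ ?_
  · intro g hg
    simp only [Finset.mem_filter, Finset.mem_univ, true_and] at hg ⊢
    rw [Fin.strictMono_iff_lt_succ]
    intro j
    have hcj := hg j
    have hsucc := ascB_succ π j.val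
    simp only [Fin.lt_def, Fin.coe_castSucc, Fin.val_succ]
    by_cases hd : descN π j.val
    · have := (Fin.lt_def).mp (hcj.2 hd)
      simp only [hd, if_true] at hsucc
      omega
    · have := (Fin.le_def).mp hcj.1
      simp only [hd, if_false] at hsucc
      omega
  · intro G hG
    simp only [Finset.mem_filter, Finset.mem_univ, true_and]
    intro j
    have hsm : StrictMono G := (Finset.mem_filter.mp hG).2
    have hlt : (G j.castSucc).val < (G j.succ).val :=
      Fin.lt_def.mp (hsm (Fin.castSucc_lt_succ : j.castSucc < j.succ))
    have h4 := ascB_le_self π j.val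
    have h5 := sm_ge hsm j.val ⟨0, Nat.succ_pos M⟩ j.castSucc
      (by show 0 + j.val = j.castSucc.val; simp)
    have hsucc := ascB_succ π j.val
    constructor
    · rw [Fin.le_def]
      simp only [Fin.coe_castSucc, Fin.val_succ]
      by_cases hd : descN π j.val
      · simp only [hd, if_true] at hsucc; omega
      · simp only [hd, if_false] at hsucc; omega
    · intro hd
      rw [Fin.lt_def]
      simp only [Fin.coe_castSucc, Fin.val_succ]
      simp only [hd, if_true] at hsucc
      omega
  · intro g hg
    funext i
    apply Fin.ext
    show (g i).val + ascB π i.val - ascB π i.val = (g i).val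
    omega
  · intro G hG
    funext i
    apply Fin.ext
    have hsm : StrictMono G := (Finset.mem_filter.mp hG).2
    have h4 := ascB_le_self π i.val
    have h5 := sm_ge hsm i.val ⟨0, Nat.succ_pos M⟩ i (by show 0 + i.val = i.val; omega)
    show (G i).val - ascB π i.val + ascB π i.val = (G i).val
    omega

lemma card_strictMono (N m : ℕ) :
    ((univ : Finset (Fin m → Fin N)).filter fun G => StrictMono G).card = N.choose m := by
  classical
  have h1 : (Finset.powersetCard m (univ : Finset (Fin N))).card = N.choose m := by
    rw [Finset.card_powersetCard, card_univ, Fintype.card_fin]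
  rw [← h1]
  apply Finset.card_bij (fun G _ => Finset.image G univ)
  · intro G hG
    simp only [mem_filter, mem_univ, true_and] at hG
    rw [Finset.mem_powersetCard]
    exact ⟨subset_univ _, by
      rw [Finset.card_image_of_injective _ hG.injective, card_univ, Fintype.card_fin]⟩
  · intro G1 h1' G2 h2' heq
    simp only [mem_filter, mem_univ, true_and] at h1' h2'
    have c1 : (Finset.image G1 univ).card = m := by
      rw [Finset.card_image_of_injective _ h1'.injective, card_univ, Fintype.card_fin]
    have e1 := Finset.orderEmbOfFin_unique c1 (f := G1)
      (fun x => Finset.mem_image_of_mem _ (mem_univ x)) h1'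
    have e2 := Finset.orderEmbOfFin_unique c1 (f := G2)
      (fun x => by rw [heq]; exact Finset.mem_image_of_mem _ (mem_univ x)) h2'
    rw [e1, e2]
  · intro s hs
    rw [Finset.mem_powersetCard] at hs
    refine ⟨⇑(s.orderEmbOfFin hs.2), by
      simp only [mem_filter, mem_univ, true_and]
      exact (s.orderEmbOfFin hs.2).strictMono, ?_⟩
    apply Finset.eq_of_subset_of_card_le
    · intro x hx
      rcases Finset.mem_image.mp hx with ⟨i, _, rfl⟩
      exact Finset.orderEmbOfFin_mem s hs.2 i
    · rw [Finset.card_image_of_injective _ (s.orderEmbOfFin hs.2).injective,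
        card_univ, Fintype.card_fin, hs.2]

lemma numDescents_le (π : Equiv.Perm (Fin (M+1))) : numDescents (M+1) π ≤ M := by
  rw [numDescents_eq]
  exact le_trans (Finset.card_filter_le _ _) (Finset.card_range M).le

lemma worpitzky (M k : ℕ) :
    ∑ j ∈ Finset.Icc 1 (M+1), eulerianA (M+1) j * (k + M + 1 - j).choose (M+1)
      = k ^ (M+1) := by
  classical
  have hcard : ((univ : Finset (Fin (M+1) → Fin k))).card = k ^ (M+1) := by
    rw [Finset.card_univ, Fintype.card_fun, Fintype.card_fin, Fintype.card_fin]
  rw [← hcard,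
    Finset.card_eq_sum_card_fiberwise
      (fun w _ => Finset.mem_univ (Tuple.sort w)) (t := univ)]
  have hfib : ∀ π : Equiv.Perm (Fin (M+1)),
      ((univ : Finset (Fin (M+1) → Fin k)).filter fun w => Tuple.sort w = π).card
        = (k + M + 1 - (numDescents (M+1) π + 1)).choose (M+1) := by
    intro π
    rw [card_fiber, card_cond, card_strictMono]
    congr 1
    have h1 : numDescents (M+1) π + ascB π M = M := by
      rw [numDescents_eq]
      unfold ascB
      rw [Finset.card_filter_add_card_filter_not, Finset.card_range]
    omega
  rw [Finset.sum_congr rfl (fun π _ => hfib π)]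
  rw [← Finset.sum_fiberwise_of_maps_to
    (g := fun π : Equiv.Perm (Fin (M+1)) => numDescents (M+1) π + 1)
    (t := Finset.Icc 1 (M+1))
    (fun π _ => by
      show numDescents (M+1) π + 1 ∈ Finset.Icc 1 (M+1)
      rw [Finset.mem_Icc]
      have := numDescents_le π
      omega)]
  apply Finset.sum_congr rfl
  intro j hj
  have hj' := Finset.mem_Icc.mp hj
  rw [Finset.sum_congr rfl (g := fun _ => (k + M + 1 - j).choose (M+1)) (fun π hπ => by
    have h := (Finset.mem_filter.mp hπ).2
    rw [h])]
  rw [Finset.sum_const, smul_eq_mul]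
  congr 1
  unfold eulerianA
  apply Finset.card_nbij' id id
  · intro π hπ
    simp only [id_eq, Finset.mem_coe, Finset.mem_filter, Finset.mem_univ, true_and] at hπ ⊢
    omega
  · intro π hπ
    simp only [id_eq, Finset.mem_coe, Finset.mem_filter, Finset.mem_univ, true_and] at hπ ⊢
    omega
  · intro π _; rfl
  · intro π _; rfl

lemma hockey (M : ℕ) : ∀ k : ℕ,
    ∑ j ∈ Finset.Icc 1 (M+1), eulerianA (M+1) j * (k + M + 1 - j).choose (M+2)
      = ∑ s ∈ Finset.range k, s ^ (M+1) := by
  intro k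
  induction k with
  | zero =>
    rw [Finset.range_zero, Finset.sum_empty]
    apply Finset.sum_eq_zero
    intro j hj
    rw [Nat.choose_eq_zero_of_lt (by omega), Nat.mul_zero]
  | succ k ih =>
    have hstep : ∀ j ∈ Finset.Icc 1 (M+1),
        eulerianA (M+1) j * (k + 1 + M + 1 - j).choose (M+2)
          = eulerianA (M+1) j * (k + M + 1 - j).choose (M+2)
            + eulerianA (M+1) j * (k + M + 1 - j).choose (M+1) := by
      intro j hj
      have hj' := Finset.mem_Icc.mp hj
      have harg : k + 1 + M + 1 - j = (k + M + 1 - j) + 1 := by omega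
      rw [harg, Nat.choose_succ_succ, Nat.mul_add, Nat.add_comm (_ * _)]
    rw [Finset.sum_congr rfl hstep, Finset.sum_add_distrib, ih, worpitzky,
      Finset.sum_range_succ]

end Worpitzky

/-- `Σ_{j=1}^{n-1} j·A_{n-1,j}·binom(n+k-j-1, n-1) = k^n - n·Σ_{s=1}^{k-1} s^(n-1)`. -/
theorem sum_j_eulerian_choose (n k : ℕ) (hn : 2 ≤ n) (hk : 1 ≤ k) :
    (∑ j ∈ Finset.Icc 1 (n - 1),
        (j : ℝ) * (eulerianA (n - 1) j : ℝ) * (Nat.choose (n + k - j - 1) (n - 1) : ℝ))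
      = (k : ℝ) ^ n - (n : ℝ) * ∑ s ∈ Finset.Icc 1 (k - 1), (s : ℝ) ^ (n - 1) := by
  obtain ⟨M, rfl⟩ : ∃ M, n = M + 2 := ⟨n - 2, by omega⟩
  have hn1 : M + 2 - 1 = M + 1 := rfl
  rw [hn1]
  -- replace the RHS sum over Icc 1 (k-1) by a sum over range k
  have hsumr : ∑ s ∈ Finset.Icc 1 (k - 1), (s : ℝ) ^ (M + 1)
      = ∑ s ∈ Finset.range k, (s : ℝ) ^ (M + 1) := by
    apply Finset.sum_subset
    · intro s hs
      have := Finset.mem_Icc.mp hs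
      rw [Finset.mem_range]
      omega
    · intro s hs hns
      have h1 := Finset.mem_range.mp hs
      have h0 : s = 0 := by
        by_contra h
        exact hns (Finset.mem_Icc.mpr ⟨by omega, by omega⟩)
      rw [h0]
      push_cast
      exact zero_pow (by omega)
  rw [hsumr]
  have key : ∀ j ∈ Finset.Icc 1 (M+1),
      (j : ℝ) * (eulerianA (M + 1) j : ℝ) * (Nat.choose (M + 2 + k - j - 1) (M + 1) : ℝ)
        = (k : ℝ) * ((eulerianA (M + 1) j : ℝ) * (Nat.choose (k + M + 1 - j) (M + 1) : ℝ))
          - ((M : ℝ) + 2) *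
            ((eulerianA (M + 1) j : ℝ) * (Nat.choose (k + M + 1 - j) (M + 2) : ℝ)) := by
    intro j hj
    have hj' := Finset.mem_Icc.mp hj
    have harg : M + 2 + k - j - 1 = k + M + 1 - j := by omega
    rw [harg]
    have hch := Nat.choose_succ_right_eq (k + M + 1 - j) (M + 1)
    rcases le_or_gt j k with hle | hlt
    · have haM : (k + M + 1 - j) - (M + 1) = k - j := by omega
      rw [haM] at hch
      have hcast := congrArg (Nat.cast (R := ℝ)) hch
      push_cast [Nat.cast_sub hle] at hcast
      linear_combination (eulerianA (M + 1) j : ℝ) * hcast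
    · have h0 : k + M + 1 - j < M + 1 := by omega
      rw [Nat.choose_eq_zero_of_lt h0, Nat.choose_eq_zero_of_lt (by omega)]
      push_cast
      ring
  rw [Finset.sum_congr rfl key, Finset.sum_sub_distrib, ← Finset.mul_sum, ← Finset.mul_sum]
  have hw : (∑ j ∈ Finset.Icc 1 (M+1),
      (eulerianA (M + 1) j : ℝ) * (Nat.choose (k + M + 1 - j) (M + 1) : ℝ))
        = (k : ℝ) ^ (M + 1) := by
    have := congrArg (Nat.cast (R := ℝ)) (Worpitzky.worpitzky M k)
    push_cast at this
    exact this
  have hh : (∑ j ∈ Finset.Icc 1 (M+1),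
      (eulerianA (M + 1) j : ℝ) * (Nat.choose (k + M + 1 - j) (M + 2) : ℝ))
        = ∑ s ∈ Finset.range k, (s : ℝ) ^ (M + 1) := by
    have := congrArg (Nat.cast (R := ℝ)) (Worpitzky.hockey M k)
    push_cast at this
    exact this
  rw [hw, hh]
  push_cast
  ring
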